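/- A technical Gaussian computation for the Stein solution. Fix x ∈ ℝ and let N be a standard Gaussian random variable. Let f_x : ℝ → ℝ be defined by f_x(u) = e^{u²/2} ∫_{−∞}^u (1_{(−∞,x]}(a) − Φ(x)) e^{−a²/2} da, where Φ(x) = (2π)^{−1/2} ∫_{−∞}^x e^{−a²/2} da. Then f_x is differentiable on ℝ ∖ {x} and E[f_x'(N)·N] = (1/3)·(x² − 1)·e^{−x²/2}/√(2π), where f_x' denotes the derivative of f_x (defined for almost every u). -/

import Mathlib

open MeasureTheory ProbabilityTheory Real Set
open Filter
open scoped NNReal ENNReal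

noncomputable def steinC (x : ℝ) : ℝ :=
  (Real.sqrt (2 * π))⁻¹ * ∫ b in Iic x, Real.exp (-b ^ 2 / 2)

noncomputable def steinH (x a : ℝ) : ℝ :=
  ((if a ≤ x then (1 : ℝ) else 0) - steinC x) * Real.exp (-a ^ 2 / 2)

noncomputable def steinG (x u : ℝ) : ℝ := ∫ a in Iio u, steinH x a

lemma gauss_integrable : Integrable (fun a : ℝ => Real.exp (-a ^ 2 / 2)) := by
  have h := integrable_exp_neg_mul_sq (by norm_num : (0:ℝ) < 1/2)
  have : (fun a : ℝ => Real.exp (-a ^ 2 / 2)) = fun a : ℝ => Real.exp (-(1/2) * a ^ 2) := by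
    funext a; congr 1; ring
  rw [this]; exact h

lemma gauss4_integrable : Integrable (fun a : ℝ => Real.exp (-a ^ 2 / 4)) := by
  have h := integrable_exp_neg_mul_sq (by norm_num : (0:ℝ) < 1/4)
  have : (fun a : ℝ => Real.exp (-a ^ 2 / 4)) = fun a : ℝ => Real.exp (-(1/4) * a ^ 2) := by
    funext a; congr 1; ring
  rw [this]; exact h

lemma gauss_integral : ∫ a : ℝ, Real.exp (-a ^ 2 / 2) = Real.sqrt (2 * π) := by
  have h := integral_gaussian (1/2)
  have e : (fun a : ℝ => Real.exp (-a ^ 2 / 2)) = fun a : ℝ => Real.exp (-(1/2) * a ^ 2) := by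
    funext a; congr 1; ring
  rw [e, h]; rw [show π / (1/2) = 2 * π by ring]

lemma gauss4_integral : ∫ a : ℝ, Real.exp (-a ^ 2 / 4) = Real.sqrt (4 * π) := by
  have h := integral_gaussian (1/4)
  have e : (fun a : ℝ => Real.exp (-a ^ 2 / 4)) = fun a : ℝ => Real.exp (-(1/4) * a ^ 2) := by
    funext a; congr 1; ring
  rw [e, h]; rw [show π / (1/4) = 4 * π by ring]

lemma poly_gauss_bound {b : ℝ} (hb : 0 < b) {n : ℕ} (hn : n ≤ 4) (u : ℝ) :
    |u ^ n * Real.exp (-b * u ^ 2)| ≤ (1 + (8 / b) ^ 2) * Real.exp (-(b / 2) * u ^ 2) := by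
  have hu2 : (0:ℝ) ≤ u ^ 2 := sq_nonneg u
  have habs : |u ^ n| = |u| ^ n := by rw [abs_pow]
  have h14 : |u| ^ n ≤ 1 + u ^ 4 := by
    rcases le_or_gt |u| 1 with h | h
    · have : |u| ^ n ≤ 1 := pow_le_one₀ (abs_nonneg u) h
      nlinarith [pow_two_nonneg (u^2)]
    · have h1 : |u| ^ n ≤ |u| ^ 4 := pow_le_pow_right₀ h.le hn
      have h2 : |u| ^ 4 = u ^ 4 := by
        rw [← abs_pow]; exact abs_of_nonneg (by positivity)
      nlinarith
  have hexp1 : u ^ 2 ≤ 8 / b * Real.exp (b / 8 * u ^ 2) := by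
    have h := Real.add_one_le_exp (b / 8 * u ^ 2)
    have hb8 : (0:ℝ) < b / 8 := by linarith
    have : b / 8 * u ^ 2 ≤ Real.exp (b / 8 * u ^ 2) := by nlinarith
    calc u ^ 2 = 8 / b * (b / 8 * u ^ 2) := by field_simp
    _ ≤ 8 / b * Real.exp (b / 8 * u ^ 2) := by
        apply mul_le_mul_of_nonneg_left this (by positivity)
  have hexp4 : u ^ 4 ≤ (8 / b) ^ 2 * Real.exp (b / 4 * u ^ 2) := by
    have h2 := mul_le_mul hexp1 hexp1 hu2 (by positivity)
    calc u ^ 4 = u ^ 2 * u ^ 2 := by ring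
    _ ≤ 8 / b * Real.exp (b / 8 * u ^ 2) * (8 / b * Real.exp (b / 8 * u ^ 2)) := h2
    _ = (8 / b) ^ 2 * (Real.exp (b / 8 * u ^ 2) * Real.exp (b / 8 * u ^ 2)) := by ring
    _ = (8 / b) ^ 2 * Real.exp (b / 4 * u ^ 2) := by
        rw [← Real.exp_add]; congr 2; ring
  have hE : Real.exp (b / 4 * u ^ 2) * Real.exp (-b * u ^ 2)
      ≤ Real.exp (-(b / 2) * u ^ 2) := by
    rw [← Real.exp_add]
    apply Real.exp_le_exp.2
    nlinarith
  have hE2 : Real.exp (-b * u ^ 2) ≤ Real.exp (-(b / 2) * u ^ 2) := by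
    apply Real.exp_le_exp.2; nlinarith
  have hEpos : (0:ℝ) < Real.exp (-b * u ^ 2) := Real.exp_pos _
  calc |u ^ n * Real.exp (-b * u ^ 2)| = |u| ^ n * Real.exp (-b * u ^ 2) := by
        rw [abs_mul, habs, abs_of_pos hEpos]
  _ ≤ (1 + u ^ 4) * Real.exp (-b * u ^ 2) := by
      apply mul_le_mul_of_nonneg_right h14 hEpos.le
  _ = Real.exp (-b * u ^ 2) + u ^ 4 * Real.exp (-b * u ^ 2) := by ring
  _ ≤ Real.exp (-(b / 2) * u ^ 2)
      + (8 / b) ^ 2 * (Real.exp (b / 4 * u ^ 2) * Real.exp (-b * u ^ 2)) := by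
      have : u ^ 4 * Real.exp (-b * u ^ 2)
          ≤ (8 / b) ^ 2 * (Real.exp (b / 4 * u ^ 2) * Real.exp (-b * u ^ 2)) := by
        rw [← mul_assoc]
        exact mul_le_mul_of_nonneg_right hexp4 hEpos.le
      linarith
  _ ≤ Real.exp (-(b / 2) * u ^ 2) + (8 / b) ^ 2 * Real.exp (-(b / 2) * u ^ 2) := by
      have := mul_le_mul_of_nonneg_left hE (by positivity : (0:ℝ) ≤ (8/b)^2)
      linarith
  _ = (1 + (8 / b) ^ 2) * Real.exp (-(b / 2) * u ^ 2) := by ring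

lemma polyGauss_integrable {b : ℝ} (hb : 0 < b) {n : ℕ} (hn : n ≤ 4) :
    Integrable (fun u : ℝ => u ^ n * Real.exp (-b * u ^ 2)) := by
  apply Integrable.mono' (((integrable_exp_neg_mul_sq (half_pos hb)).const_mul (1 + (8/b)^2)))
  · exact ((continuous_pow n).mul
      (Real.continuous_exp.comp (by continuity))).aestronglyMeasurable
  · exact ae_of_all _ fun u => by
      rw [Real.norm_eq_abs]; exact poly_gauss_bound hb hn u

lemma polyGauss_tendsto_atTop {b : ℝ} (hb : 0 < b) (n : ℕ) :
    Tendsto (fun u : ℝ => u ^ n * Real.exp (-b * u ^ 2)) atTop (nhds 0) := by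
  apply squeeze_zero_norm' (a := fun u : ℝ => u ^ n * Real.exp (-u))
  · filter_upwards [eventually_ge_atTop (max 1 b⁻¹)] with u hu
    have h1 : (1:ℝ) ≤ u := le_trans (le_max_left _ _) hu
    have h2 : b⁻¹ ≤ u := le_trans (le_max_right _ _) hu
    have hu0 : (0:ℝ) < u := by linarith
    have hbu : 1 ≤ b * u := by
      nlinarith [mul_inv_cancel₀ hb.ne', mul_le_mul_of_nonneg_left h2 hb.le]
    have hexp : Real.exp (-b * u ^ 2) ≤ Real.exp (-u) := by
      apply Real.exp_le_exp.2; nlinarith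
    rw [Real.norm_eq_abs, abs_mul, abs_pow, abs_of_pos hu0,
      abs_of_pos (Real.exp_pos _)]
    exact mul_le_mul_of_nonneg_left hexp (by positivity)
  · exact tendsto_pow_mul_exp_neg_atTop_nhds_zero n

lemma polyGauss_tendsto_atBot {b : ℝ} (hb : 0 < b) (n : ℕ) :
    Tendsto (fun u : ℝ => u ^ n * Real.exp (-b * u ^ 2)) atBot (nhds 0) := by
  apply squeeze_zero_norm' (a := fun u : ℝ => (-u) ^ n * Real.exp (-(-u)))
  · filter_upwards [eventually_le_atBot (-(max 1 b⁻¹))] with u hu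
    have h1 : (1:ℝ) ≤ -u := by
      have := le_max_left (1:ℝ) b⁻¹; linarith
    have h2 : b⁻¹ ≤ -u := by
      have := le_max_right (1:ℝ) b⁻¹; linarith
    have hu0 : (0:ℝ) < -u := by linarith
    have hbu : 1 ≤ b * (-u) := by
      nlinarith [mul_inv_cancel₀ hb.ne', mul_le_mul_of_nonneg_left h2 hb.le]
    have hexp : Real.exp (-b * u ^ 2) ≤ Real.exp (-(-u)) := by
      apply Real.exp_le_exp.2; nlinarith
    rw [Real.norm_eq_abs, abs_mul, abs_pow, abs_of_pos (Real.exp_pos _)]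
    have : |u| = -u := abs_of_neg (by linarith)
    rw [this]
    exact mul_le_mul_of_nonneg_left hexp (by positivity)
  · have h := tendsto_pow_mul_exp_neg_atTop_nhds_zero n
    exact h.comp tendsto_neg_atBot_atTop

lemma steinH_meas (x : ℝ) : Measurable (steinH x) := by
  unfold steinH
  apply Measurable.mul
  · apply Measurable.sub _ measurable_const
    exact Measurable.ite measurableSet_Iic measurable_const measurable_const
  · exact (Real.continuous_exp.comp (by continuity)).measurable

lemma steinH_abs_le (x a : ℝ) :
    |steinH x a| ≤ (1 + |steinC x|) * Real.exp (-a ^ 2 / 2) := by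
  unfold steinH
  rw [abs_mul, abs_of_pos (Real.exp_pos _)]
  apply mul_le_mul_of_nonneg_right _ (Real.exp_pos _).le
  have := abs_sub_abs_le_abs_sub ((if a ≤ x then (1:ℝ) else 0)) (steinC x)
  have h2 : |if a ≤ x then (1:ℝ) else 0| ≤ 1 := by split <;> simp
  calc |(if a ≤ x then (1:ℝ) else 0) - steinC x|
      ≤ |if a ≤ x then (1:ℝ) else 0| + |steinC x| := abs_sub _ _
  _ ≤ 1 + |steinC x| := by linarith

lemma steinH_integrable (x : ℝ) : Integrable (steinH x) := by
  apply Integrable.mono' (gauss_integrable.const_mul (1 + |steinC x|))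
  · exact (steinH_meas x).aestronglyMeasurable
  · exact ae_of_all _ fun a => by
      rw [Real.norm_eq_abs]; exact steinH_abs_le x a

lemma sqrt_two_pi_pos : (0:ℝ) < Real.sqrt (2 * π) :=
  Real.sqrt_pos.2 (by positivity)

lemma steinH_indicator_integrable (x : ℝ) {n : ℕ} (hn : n ≤ 4) :
    Integrable (fun a : ℝ => (if a ≤ x then (1:ℝ) else 0) * (a ^ n * Real.exp (-a ^ 2 / 2))) := by
  have hint : Integrable (fun a : ℝ => a ^ n * Real.exp (-a ^ 2 / 2)) := by
    have h := polyGauss_integrable (by norm_num : (0:ℝ) < 1/2) hn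
    have e : (fun a : ℝ => a ^ n * Real.exp (-a ^ 2 / 2))
        = fun a : ℝ => a ^ n * Real.exp (-(1/2) * a ^ 2) := by
      funext a; congr 2; ring
    rw [e]; exact h
  have : (fun a : ℝ => (if a ≤ x then (1:ℝ) else 0) * (a ^ n * Real.exp (-a ^ 2 / 2)))
      = (Iic x).indicator (fun a : ℝ => a ^ n * Real.exp (-a ^ 2 / 2)) := by
    funext a
    rw [Set.indicator_apply]
    simp only [mem_Iic]
    split <;> simp
  rw [this]
  exact hint.indicator measurableSet_Iic

lemma indicator_integral (x : ℝ) (f : ℝ → ℝ) :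
    ∫ a, (if a ≤ x then (1:ℝ) else 0) * f a = ∫ a in Iic x, f a := by
  rw [← integral_indicator measurableSet_Iic]
  congr 1
  funext a
  rw [Set.indicator_apply]
  simp only [mem_Iic]
  split <;> simp

lemma steinH_integral (x : ℝ) : ∫ a, steinH x a = 0 := by
  have h1 : Integrable (fun a : ℝ => (if a ≤ x then (1:ℝ) else 0) * Real.exp (-a ^ 2 / 2)) := by
    have := steinH_indicator_integrable x (by norm_num : 0 ≤ 4)
    simpa using this
  have h2 : Integrable (fun a : ℝ => steinC x * Real.exp (-a ^ 2 / 2)) :=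
    gauss_integrable.const_mul _
  have e : steinH x = fun a => (if a ≤ x then (1:ℝ) else 0) * Real.exp (-a ^ 2 / 2)
      - steinC x * Real.exp (-a ^ 2 / 2) := by
    funext a; unfold steinH; ring
  rw [e, integral_sub h1 h2, integral_const_mul, gauss_integral]
  have h3 : ∫ a, (if a ≤ x then (1:ℝ) else 0) * Real.exp (-a ^ 2 / 2)
      = ∫ a in Iic x, Real.exp (-a ^ 2 / 2) := by
    have := indicator_integral x (fun a => Real.exp (-a ^ 2 / 2))
    simpa using this
  rw [h3]
  unfold steinC
  field_simp
  ring

lemma steinG_eq (x u : ℝ) :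
    steinG x u = steinG x 0 + ∫ t in (0:ℝ)..u, steinH x t := by
  have hI := steinH_integrable x
  have h1 : ∀ v : ℝ, steinG x v = ∫ a in Iic v, steinH x a := by
    intro v
    unfold steinG
    exact setIntegral_congr_set Iio_ae_eq_Iic
  rw [h1, h1, ← intervalIntegral.integral_Iic_sub_Iic hI.integrableOn hI.integrableOn]
  ring

lemma steinG_continuous (x : ℝ) : Continuous (steinG x) := by
  have : steinG x = fun u => steinG x 0 + ∫ t in (0:ℝ)..u, steinH x t :=
    funext (steinG_eq x)
  rw [this]
  exact continuous_const.add ((steinH_integrable x).continuous_primitive 0)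

lemma steinH_continuousAt (x u : ℝ) (hu : u ≠ x) : ContinuousAt (steinH x) u := by
  rcases lt_or_gt_of_ne hu with h | h
  · have hmem : Iio x ∈ nhds u := Iio_mem_nhds h
    have heq : steinH x =ᶠ[nhds u] fun a => (1 - steinC x) * Real.exp (-a ^ 2 / 2) := by
      filter_upwards [hmem] with a ha
      unfold steinH
      rw [if_pos (le_of_lt ha)]
    apply ContinuousAt.congr _ heq.symm
    exact (continuous_const.mul (Real.continuous_exp.comp (by continuity))).continuousAt
  · have hmem : Ioi x ∈ nhds u := Ioi_mem_nhds h
    have heq : steinH x =ᶠ[nhds u] fun a => (0 - steinC x) * Real.exp (-a ^ 2 / 2) := by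
      filter_upwards [hmem] with a ha
      unfold steinH
      rw [if_neg (not_le.mpr ha)]
    apply ContinuousAt.congr _ heq.symm
    exact (continuous_const.mul (Real.continuous_exp.comp (by continuity))).continuousAt

lemma steinG_hasDerivAt (x u : ℝ) (hu : u ≠ x) :
    HasDerivAt (steinG x) (steinH x u) u := by
  have : steinG x = fun u => steinG x 0 + ∫ t in (0:ℝ)..u, steinH x t :=
    funext (steinG_eq x)
  rw [this]
  apply HasDerivAt.const_add
  exact intervalIntegral.integral_hasDerivAt_right
    ((steinH_integrable x).intervalIntegrable)
    ((steinH_meas x).stronglyMeasurable.stronglyMeasurableAtFilter)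
    (steinH_continuousAt x u hu)

lemma tail_Iio (u : ℝ) (hu : u ≤ 0) :
    ∫ a in Iio u, Real.exp (-a ^ 2 / 2) ≤ Real.sqrt (4 * π) * Real.exp (-u ^ 2 / 4) := by
  have h1 : ∫ a in Iio u, Real.exp (-a ^ 2 / 2)
      ≤ ∫ a in Iio u, Real.exp (-u ^ 2 / 4) * Real.exp (-a ^ 2 / 4) := by
    apply setIntegral_mono_on gauss_integrable.integrableOn
      ((gauss4_integrable.const_mul _).integrableOn) measurableSet_Iio
    intro a ha
    rw [← Real.exp_add]
    apply Real.exp_le_exp.2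
    have : a ≤ u := le_of_lt ha
    nlinarith
  have h2 : ∫ a in Iio u, Real.exp (-u ^ 2 / 4) * Real.exp (-a ^ 2 / 4)
      ≤ Real.exp (-u ^ 2 / 4) * Real.sqrt (4 * π) := by
    rw [← gauss4_integral, ← integral_const_mul]
    apply setIntegral_le_integral (gauss4_integrable.const_mul _)
    exact ae_of_all _ fun a => by positivity
  linarith [h1, h2]

lemma tail_Ici (u : ℝ) (hu : 0 ≤ u) :
    ∫ a in Ici u, Real.exp (-a ^ 2 / 2) ≤ Real.sqrt (4 * π) * Real.exp (-u ^ 2 / 4) := by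
  have h1 : ∫ a in Ici u, Real.exp (-a ^ 2 / 2)
      ≤ ∫ a in Ici u, Real.exp (-u ^ 2 / 4) * Real.exp (-a ^ 2 / 4) := by
    apply setIntegral_mono_on gauss_integrable.integrableOn
      ((gauss4_integrable.const_mul _).integrableOn) measurableSet_Ici
    intro a ha
    rw [← Real.exp_add]
    apply Real.exp_le_exp.2
    have : u ≤ a := ha
    nlinarith
  have h2 : ∫ a in Ici u, Real.exp (-u ^ 2 / 4) * Real.exp (-a ^ 2 / 4)
      ≤ Real.exp (-u ^ 2 / 4) * Real.sqrt (4 * π) := by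
    rw [← gauss4_integral, ← integral_const_mul]
    apply setIntegral_le_integral (gauss4_integrable.const_mul _)
    exact ae_of_all _ fun a => by positivity
  linarith [h1, h2]

lemma steinG_abs_le (x u : ℝ) :
    |steinG x u| ≤ ((1 + |steinC x|) * Real.sqrt (4 * π)) * Real.exp (-u ^ 2 / 4) := by
  have hI := steinH_integrable x
  have key : ∀ s : Set ℝ, MeasurableSet s →
      (∫ a in s, Real.exp (-a ^ 2 / 2)) ≤ Real.sqrt (4 * π) * Real.exp (-u ^ 2 / 4) →
      |∫ a in s, steinH x a| ≤ ((1 + |steinC x|) * Real.sqrt (4 * π)) * Real.exp (-u ^ 2 / 4) := by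
    intro s hs htail
    have h1 : |∫ a in s, steinH x a| ≤ ∫ a in s, |steinH x a| := by
      simpa [Real.norm_eq_abs] using
        norm_integral_le_integral_norm (μ := volume.restrict s) (steinH x)
    have h2 : ∫ a in s, |steinH x a| ≤ ∫ a in s, (1 + |steinC x|) * Real.exp (-a ^ 2 / 2) := by
      apply setIntegral_mono_on hI.abs.integrableOn
        ((gauss_integrable.const_mul _).integrableOn) hs
      intro a _
      exact steinH_abs_le x a
    have h3 : ∫ a in s, (1 + |steinC x|) * Real.exp (-a ^ 2 / 2)
        = (1 + |steinC x|) * ∫ a in s, Real.exp (-a ^ 2 / 2) := integral_const_mul _ _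
    have h4 : (0:ℝ) ≤ 1 + |steinC x| := by positivity
    calc |∫ a in s, steinH x a| ≤ ∫ a in s, |steinH x a| := h1
    _ ≤ (1 + |steinC x|) * ∫ a in s, Real.exp (-a ^ 2 / 2) := by rw [← h3]; exact h2
    _ ≤ (1 + |steinC x|) * (Real.sqrt (4 * π) * Real.exp (-u ^ 2 / 4)) :=
        mul_le_mul_of_nonneg_left htail h4
    _ = ((1 + |steinC x|) * Real.sqrt (4 * π)) * Real.exp (-u ^ 2 / 4) := by ring
  rcases le_or_gt u 0 with hu | hu
  · exact key (Iio u) measurableSet_Iio (tail_Iio u hu)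
  · have hsplit : steinG x u = -∫ a in Ici u, steinH x a := by
      have := intervalIntegral.integral_Iio_add_Ici (b := u) hI.integrableOn hI.integrableOn
      unfold steinG
      rw [steinH_integral x] at this
      linarith
    rw [hsplit, abs_neg]
    exact key (Ici u) measurableSet_Ici (tail_Ici u hu.le)

lemma form2 (n : ℕ) : (fun u : ℝ => u ^ n * Real.exp (-u ^ 2 / 2))
    = fun u : ℝ => u ^ n * Real.exp (-(1/2) * u ^ 2) := by
  funext u; congr 2; ring

lemma form4 (n : ℕ) : (fun u : ℝ => u ^ n * Real.exp (-u ^ 2 / 4))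
    = fun u : ℝ => u ^ n * Real.exp (-(1/4) * u ^ 2) := by
  funext u; congr 2; ring

lemma polyGauss2_integrable {n : ℕ} (hn : n ≤ 4) :
    Integrable (fun u : ℝ => u ^ n * Real.exp (-u ^ 2 / 2)) := by
  rw [form2]; exact polyGauss_integrable (by norm_num) hn

lemma polyGauss4_integrable {n : ℕ} (hn : n ≤ 4) :
    Integrable (fun u : ℝ => u ^ n * Real.exp (-u ^ 2 / 4)) := by
  rw [form4]; exact polyGauss_integrable (by norm_num) hn

lemma hasDerivAt_negexp (u : ℝ) :
    HasDerivAt (fun u : ℝ => -Real.exp (-u ^ 2 / 2)) (u * Real.exp (-u ^ 2 / 2)) u := by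
  have h1 : HasDerivAt (fun u : ℝ => -u ^ 2 / 2) (-u) u := by
    have := ((hasDerivAt_pow 2 u).neg.div_const 2)
    refine this.congr_deriv (Eq.symm ?_)
    push_cast; ring
  have h2 := (h1.exp).neg
  refine h2.congr_deriv (Eq.symm ?_)
  ring

lemma hasDerivAt_cube_anti (u : ℝ) :
    HasDerivAt (fun u : ℝ => -(u ^ 2 + 2) * Real.exp (-u ^ 2 / 2))
      (u ^ 3 * Real.exp (-u ^ 2 / 2)) u := by
  have h1 : HasDerivAt (fun u : ℝ => -(u ^ 2 + 2)) (-(2 * u)) u := by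
    have := ((hasDerivAt_pow 2 u).add_const 2).neg
    refine this.congr_deriv (Eq.symm ?_)
    push_cast; ring
  have h2 : HasDerivAt (fun u : ℝ => -u ^ 2 / 2) (-u) u := by
    have := ((hasDerivAt_pow 2 u).neg.div_const 2)
    refine this.congr_deriv (Eq.symm ?_)
    push_cast; ring
  have h3 := h1.mul h2.exp
  refine h3.congr_deriv (Eq.symm ?_)
  ring

lemma exp_tendsto_atBot : Tendsto (fun u : ℝ => Real.exp (-u ^ 2 / 2)) atBot (nhds 0) := by
  have h := polyGauss_tendsto_atBot (by norm_num : (0:ℝ) < 1/2) 0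
  simp only [pow_zero, one_mul] at h
  have e : (fun u : ℝ => Real.exp (-u ^ 2 / 2)) = fun u : ℝ => Real.exp (-(1/2) * u ^ 2) := by
    funext u; congr 1; ring
  rw [e]; exact h

lemma exp_tendsto_atTop : Tendsto (fun u : ℝ => Real.exp (-u ^ 2 / 2)) atTop (nhds 0) := by
  have h := polyGauss_tendsto_atTop (by norm_num : (0:ℝ) < 1/2) 0
  simp only [pow_zero, one_mul] at h
  have e : (fun u : ℝ => Real.exp (-u ^ 2 / 2)) = fun u : ℝ => Real.exp (-(1/2) * u ^ 2) := by
    funext u; congr 1; ring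
  rw [e]; exact h

lemma sq_exp_tendsto_atBot :
    Tendsto (fun u : ℝ => -(u ^ 2 + 2) * Real.exp (-u ^ 2 / 2)) atBot (nhds 0) := by
  have h2 := polyGauss_tendsto_atBot (by norm_num : (0:ℝ) < 1/2) 2
  have h0 := exp_tendsto_atBot
  have e2 : (fun u : ℝ => u ^ 2 * Real.exp (-u ^ 2 / 2))
      = fun u : ℝ => u ^ 2 * Real.exp (-(1/2) * u ^ 2) := form2 2
  rw [← e2] at h2
  have := (h2.add (h0.const_mul 2)).neg
  simp only [neg_zero, mul_zero, add_zero, zero_add, neg_add] at this ⊢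
  convert this using 2 with u
  ring

lemma sq_exp_tendsto_atTop :
    Tendsto (fun u : ℝ => -(u ^ 2 + 2) * Real.exp (-u ^ 2 / 2)) atTop (nhds 0) := by
  have h2 := polyGauss_tendsto_atTop (by norm_num : (0:ℝ) < 1/2) 2
  have h0 := exp_tendsto_atTop
  have e2 : (fun u : ℝ => u ^ 2 * Real.exp (-u ^ 2 / 2))
      = fun u : ℝ => u ^ 2 * Real.exp (-(1/2) * u ^ 2) := form2 2
  rw [← e2] at h2
  have := (h2.add (h0.const_mul 2)).neg
  simp only [neg_zero, mul_zero, add_zero, zero_add, neg_add] at this ⊢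
  convert this using 2 with u
  ring

lemma integral_Iic_mono1 (x : ℝ) :
    ∫ u in Iic x, u * Real.exp (-u ^ 2 / 2) = -Real.exp (-x ^ 2 / 2) := by
  have h := integral_Iic_of_hasDerivAt_of_tendsto' (a := x)
    (f := fun u : ℝ => -Real.exp (-u ^ 2 / 2))
    (f' := fun u : ℝ => u * Real.exp (-u ^ 2 / 2))
    (fun u _ => hasDerivAt_negexp u)
    (by
      have := polyGauss2_integrable (by norm_num : 1 ≤ 4)
      simp only [pow_one] at this
      exact this.integrableOn)
    (by simpa using exp_tendsto_atBot.neg)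
  simpa using h

lemma integral_mono1 : ∫ u : ℝ, u * Real.exp (-u ^ 2 / 2) = 0 := by
  have hint : Integrable (fun u : ℝ => u * Real.exp (-u ^ 2 / 2)) := by
    have := polyGauss2_integrable (by norm_num : 1 ≤ 4)
    simpa using this
  have hIic := integral_Iic_mono1 0
  have hIoi : ∫ u in Ioi (0:ℝ), u * Real.exp (-u ^ 2 / 2) = 1 := by
    have h := integral_Ioi_of_hasDerivAt_of_tendsto' (a := (0:ℝ))
      (f := fun u : ℝ => -Real.exp (-u ^ 2 / 2))
      (f' := fun u : ℝ => u * Real.exp (-u ^ 2 / 2))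
      (fun u _ => hasDerivAt_negexp u)
      hint.integrableOn
      (by simpa using exp_tendsto_atTop.neg)
    simpa using h
  rw [← intervalIntegral.integral_Iic_add_Ioi (b := (0:ℝ)) hint.integrableOn hint.integrableOn,
    hIic, hIoi]
  norm_num

lemma integral_Iic_mono3 (x : ℝ) :
    ∫ u in Iic x, u ^ 3 * Real.exp (-u ^ 2 / 2) = -(x ^ 2 + 2) * Real.exp (-x ^ 2 / 2) := by
  have h := integral_Iic_of_hasDerivAt_of_tendsto' (a := x)
    (f := fun u : ℝ => -(u ^ 2 + 2) * Real.exp (-u ^ 2 / 2))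
    (f' := fun u : ℝ => u ^ 3 * Real.exp (-u ^ 2 / 2))
    (fun u _ => hasDerivAt_cube_anti u)
    ((polyGauss2_integrable (by norm_num : 3 ≤ 4)).integrableOn)
    sq_exp_tendsto_atBot
  simpa using h

lemma integral_mono3 : ∫ u : ℝ, u ^ 3 * Real.exp (-u ^ 2 / 2) = 0 := by
  have hint := polyGauss2_integrable (by norm_num : 3 ≤ 4)
  have hIic := integral_Iic_mono3 0
  have hIoi : ∫ u in Ioi (0:ℝ), u ^ 3 * Real.exp (-u ^ 2 / 2) = 2 := by
    have h := integral_Ioi_of_hasDerivAt_of_tendsto' (a := (0:ℝ))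
      (f := fun u : ℝ => -(u ^ 2 + 2) * Real.exp (-u ^ 2 / 2))
      (f' := fun u : ℝ => u ^ 3 * Real.exp (-u ^ 2 / 2))
      (fun u _ => hasDerivAt_cube_anti u)
      hint.integrableOn
      sq_exp_tendsto_atTop
    simp at h
    linarith
  rw [← intervalIntegral.integral_Iic_add_Ioi (b := (0:ℝ)) hint.integrableOn hint.integrableOn,
    hIic, hIoi]
  norm_num

lemma steinH_mom (x : ℝ) {n : ℕ} (hn : n ≤ 4) :
    ∫ u : ℝ, u ^ n * steinH x u
      = (∫ u in Iic x, u ^ n * Real.exp (-u ^ 2 / 2))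
        - steinC x * ∫ u : ℝ, u ^ n * Real.exp (-u ^ 2 / 2) := by
  have h1 := steinH_indicator_integrable x hn
  have h2 : Integrable (fun u : ℝ => steinC x * (u ^ n * Real.exp (-u ^ 2 / 2))) :=
    (polyGauss2_integrable hn).const_mul _
  have e : (fun u : ℝ => u ^ n * steinH x u)
      = fun u : ℝ => (if u ≤ x then (1:ℝ) else 0) * (u ^ n * Real.exp (-u ^ 2 / 2))
        - steinC x * (u ^ n * Real.exp (-u ^ 2 / 2)) := by
    funext u; unfold steinH; ring
  rw [e, integral_sub h1 h2, integral_const_mul,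
    indicator_integral x (fun u => u ^ n * Real.exp (-u ^ 2 / 2))]

lemma steinH_mom1 (x : ℝ) : ∫ u : ℝ, u * steinH x u = -Real.exp (-x ^ 2 / 2) := by
  have h := steinH_mom x (by norm_num : 1 ≤ 4)
  simp only [pow_one] at h
  rw [h, integral_Iic_mono1, integral_mono1]
  ring

lemma steinH_mom3 (x : ℝ) :
    ∫ u : ℝ, u ^ 3 * steinH x u = -(x ^ 2 + 2) * Real.exp (-x ^ 2 / 2) := by
  rw [steinH_mom x (by norm_num : 3 ≤ 4), integral_Iic_mono3, integral_mono3]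
  ring

lemma steinG_sq_integrable (x : ℝ) :
    Integrable (fun u : ℝ => u ^ 2 * steinG x u) := by
  set K := (1 + |steinC x|) * Real.sqrt (4 * π) with hK
  apply Integrable.mono' ((polyGauss4_integrable (by norm_num : 2 ≤ 4)).const_mul K)
  · exact ((continuous_pow 2).mul (steinG_continuous x)).aestronglyMeasurable
  · refine ae_of_all _ fun u => ?_
    rw [Real.norm_eq_abs, abs_mul, abs_pow, sq_abs]
    calc u ^ 2 * |steinG x u| ≤ u ^ 2 * (K * Real.exp (-u ^ 2 / 4)) :=
          mul_le_mul_of_nonneg_left (steinG_abs_le x u) (sq_nonneg u)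
    _ = K * (u ^ 2 * Real.exp (-u ^ 2 / 4)) := by ring

lemma steinH_cube_integrable (x : ℝ) :
    Integrable (fun u : ℝ => u ^ 3 / 3 * steinH x u) := by
  apply Integrable.mono'
    (((polyGauss2_integrable (by norm_num : 3 ≤ 4)).abs.const_mul ((1 + |steinC x|) / 3)))
  · exact (((measurable_id.pow_const 3).div_const 3).mul (steinH_meas x)).aestronglyMeasurable
  · refine ae_of_all _ fun u => ?_
    rw [Real.norm_eq_abs, abs_mul, abs_div]
    have h1 : |steinH x u| ≤ (1 + |steinC x|) * Real.exp (-u ^ 2 / 2) := steinH_abs_le x u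
    have h2 : |u ^ 3 * Real.exp (-u ^ 2 / 2)| = |u ^ 3| * Real.exp (-u ^ 2 / 2) := by
      rw [abs_mul, abs_of_pos (Real.exp_pos _)]
    have h3 : (0:ℝ) ≤ |u ^ 3| := abs_nonneg _
    calc |u ^ 3| / |(3:ℝ)| * |steinH x u|
        ≤ |u ^ 3| / 3 * ((1 + |steinC x|) * Real.exp (-u ^ 2 / 2)) := by
          rw [show |(3:ℝ)| = 3 by norm_num]
          exact mul_le_mul_of_nonneg_left h1 (by positivity)
    _ = (1 + |steinC x|) / 3 * (|u ^ 3| * Real.exp (-u ^ 2 / 2)) := by ring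
    _ = (1 + |steinC x|) / 3 * |u ^ 3 * Real.exp (-u ^ 2 / 2)| := by rw [h2]

lemma steinG_cube_tendsto_atTop (x : ℝ) :
    Tendsto (fun u : ℝ => u ^ 3 / 3 * steinG x u) atTop (nhds 0) := by
  set K := (1 + |steinC x|) * Real.sqrt (4 * π) with hK
  apply squeeze_zero_norm' (a := fun u : ℝ => K / 3 * |u ^ 3 * Real.exp (-u ^ 2 / 4)|)
  · refine Eventually.of_forall fun u => ?_
    rw [Real.norm_eq_abs, abs_mul, abs_div, abs_mul, abs_of_pos (Real.exp_pos _),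
      show |(3:ℝ)| = 3 by norm_num]
    calc |u ^ 3| / 3 * |steinG x u| ≤ |u ^ 3| / 3 * (K * Real.exp (-u ^ 2 / 4)) :=
          mul_le_mul_of_nonneg_left (steinG_abs_le x u) (by positivity)
    _ = K / 3 * (|u ^ 3| * Real.exp (-u ^ 2 / 4)) := by ring
  · have h := (polyGauss_tendsto_atTop (by norm_num : (0:ℝ) < 1/4) 3).abs
    rw [abs_zero] at h
    have h2 := h.const_mul (K / 3)
    rw [mul_zero] at h2
    have e' : ∀ u : ℝ, -u ^ 2 / 4 = -(1/4) * u ^ 2 := fun u => by ring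
    simp only [e']
    exact h2

lemma steinG_cube_tendsto_atBot (x : ℝ) :
    Tendsto (fun u : ℝ => u ^ 3 / 3 * steinG x u) atBot (nhds 0) := by
  set K := (1 + |steinC x|) * Real.sqrt (4 * π) with hK
  apply squeeze_zero_norm' (a := fun u : ℝ => K / 3 * |u ^ 3 * Real.exp (-u ^ 2 / 4)|)
  · refine Eventually.of_forall fun u => ?_
    rw [Real.norm_eq_abs, abs_mul, abs_div, abs_mul, abs_of_pos (Real.exp_pos _),
      show |(3:ℝ)| = 3 by norm_num]
    calc |u ^ 3| / 3 * |steinG x u| ≤ |u ^ 3| / 3 * (K * Real.exp (-u ^ 2 / 4)) :=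
          mul_le_mul_of_nonneg_left (steinG_abs_le x u) (by positivity)
    _ = K / 3 * (|u ^ 3| * Real.exp (-u ^ 2 / 4)) := by ring
  · have h := (polyGauss_tendsto_atBot (by norm_num : (0:ℝ) < 1/4) 3).abs
    rw [abs_zero] at h
    have h2 := h.const_mul (K / 3)
    rw [mul_zero] at h2
    have e' : ∀ u : ℝ, -u ^ 2 / 4 = -(1/4) * u ^ 2 := fun u => by ring
    simp only [e']
    exact h2

lemma steinG_sq_integral (x : ℝ) :
    ∫ u : ℝ, u ^ 2 * steinG x u = (1/3) * (x ^ 2 + 2) * Real.exp (-x ^ 2 / 2) := by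
  have hInt1 := steinG_sq_integrable x
  have hInt2 := steinH_cube_integrable x
  have hFderiv : ∀ u : ℝ, u ≠ x → HasDerivAt (fun u : ℝ => u ^ 3 / 3 * steinG x u)
      (u ^ 2 * steinG x u + u ^ 3 / 3 * steinH x u) u := by
    intro u hu
    have h1 : HasDerivAt (fun u : ℝ => u ^ 3 / 3) (u ^ 2) u := by
      have := (hasDerivAt_pow 3 u).div_const 3
      refine this.congr_deriv (Eq.symm ?_)
      push_cast; ring
    exact h1.mul (steinG_hasDerivAt x u hu)
  have hFcont : Continuous (fun u : ℝ => u ^ 3 / 3 * steinG x u) :=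
    ((continuous_pow 3).div_const 3).mul (steinG_continuous x)
  have hInt12 : Integrable (fun u : ℝ => u ^ 2 * steinG x u + u ^ 3 / 3 * steinH x u) :=
    hInt1.add hInt2
  have hIic : ∫ u in Iic x, (u ^ 2 * steinG x u + u ^ 3 / 3 * steinH x u)
      = x ^ 3 / 3 * steinG x x - 0 := by
    exact integral_Iic_of_hasDerivAt_of_tendsto (a := x)
      hFcont.continuousWithinAt
      (fun u hu => hFderiv u (ne_of_lt hu))
      hInt12.integrableOn
      (steinG_cube_tendsto_atBot x)
  have hIoi : ∫ u in Ioi x, (u ^ 2 * steinG x u + u ^ 3 / 3 * steinH x u)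
      = 0 - x ^ 3 / 3 * steinG x x := by
    exact integral_Ioi_of_hasDerivAt_of_tendsto (a := x)
      hFcont.continuousWithinAt
      (fun u hu => hFderiv u (ne_of_gt hu))
      hInt12.integrableOn
      (steinG_cube_tendsto_atTop x)
  have htotal : ∫ u : ℝ, (u ^ 2 * steinG x u + u ^ 3 / 3 * steinH x u) = 0 := by
    rw [← intervalIntegral.integral_Iic_add_Ioi (b := x)
      hInt12.integrableOn hInt12.integrableOn, hIic, hIoi]
    ring
  have hsplit : (∫ u : ℝ, u ^ 2 * steinG x u) + (∫ u : ℝ, u ^ 3 / 3 * steinH x u) = 0 := by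
    have h := integral_add hInt1 hInt2
    beta_reduce at h
    rw [← h]
    exact htotal
  have hcube : ∫ u : ℝ, u ^ 3 / 3 * steinH x u = (1/3) * (-(x ^ 2 + 2) * Real.exp (-x ^ 2 / 2)) := by
    have e : (fun u : ℝ => u ^ 3 / 3 * steinH x u) = fun u : ℝ => (1/3) * (u ^ 3 * steinH x u) := by
      funext u; ring
    rw [e, integral_const_mul, steinH_mom3]
  rw [hcube] at hsplit
  linarith

lemma steinH_mom_integrable (x : ℝ) {n : ℕ} (hn : n ≤ 4) :
    Integrable (fun u : ℝ => u ^ n * steinH x u) := by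
  have e : (fun u : ℝ => u ^ n * steinH x u)
      = fun u : ℝ => (if u ≤ x then (1:ℝ) else 0) * (u ^ n * Real.exp (-u ^ 2 / 2))
        - steinC x * (u ^ n * Real.exp (-u ^ 2 / 2)) := by
    funext u; unfold steinH; ring
  rw [e]
  exact (steinH_indicator_integrable x hn).sub ((polyGauss2_integrable hn).const_mul _)

lemma gaussianReal_singleton (x : ℝ) : (gaussianReal 0 1) {x} = 0 := by
  rw [gaussianReal_of_var_ne_zero 0 one_ne_zero,
    withDensity_apply _ (measurableSet_singleton x)]
  exact setLIntegral_measure_zero _ _ (by simp)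

lemma gaussianPDFReal_std (u : ℝ) :
    gaussianPDFReal 0 1 u = (Real.sqrt (2 * π))⁻¹ * Real.exp (-u ^ 2 / 2) := by
  unfold gaussianPDFReal
  norm_num

theorem stein_solution_fourth_moment_computation (x : ℝ) :
    ∀ fx : ℝ → ℝ,
      (fx = fun u => Real.exp (u ^ 2 / 2) *
        ∫ a in Iio u,
          ((if a ≤ x then (1 : ℝ) else 0) -
              (Real.sqrt (2 * π))⁻¹ * ∫ b in Iic x, Real.exp (-b ^ 2 / 2)) *
            Real.exp (-a ^ 2 / 2)) →
      (∀ u : ℝ, u ≠ x → DifferentiableAt ℝ fx u) ∧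
      ∫ u, deriv fx u * u ∂(gaussianReal 0 1) =
        (1 / 3) * (x ^ 2 - 1) * Real.exp (-x ^ 2 / 2) / Real.sqrt (2 * π) := by
  intro fx hfx
  have hfx' : fx = fun u => Real.exp (u ^ 2 / 2) * steinG x u := by
    rw [hfx]; rfl
  have hD : ∀ u : ℝ, u ≠ x → HasDerivAt fx
      (u * fx u + ((if u ≤ x then (1:ℝ) else 0) - steinC x)) u := by
    intro u hu
    have h1 : HasDerivAt (fun u : ℝ => u ^ 2 / 2) u u := by
      have := (hasDerivAt_pow 2 u).div_const 2
      refine this.congr_deriv (Eq.symm ?_); push_cast; ring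
    have hexp := h1.exp
    have hmul := hexp.mul (steinG_hasDerivAt x u hu)
    rw [hfx']
    refine hmul.congr_deriv (Eq.symm ?_)
    unfold steinH
    have hee : Real.exp (u ^ 2 / 2) * Real.exp (-u ^ 2 / 2) = 1 := by
      rw [← Real.exp_add, show u ^ 2 / 2 + -u ^ 2 / 2 = 0 by ring, Real.exp_zero]
    linear_combination (steinC x - (if u ≤ x then (1:ℝ) else 0)) * hee
  refine ⟨fun u hu => (hD u hu).differentiableAt, ?_⟩
  have hae : ∀ᵐ u ∂(gaussianReal 0 1),
      deriv fx u * u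
        = (u * fx u + ((if u ≤ x then (1:ℝ) else 0) - steinC x)) * u := by
    have hne : ∀ᵐ u ∂(gaussianReal 0 1), u ≠ x := by
      rw [ae_iff]
      have hset : {u : ℝ | ¬ u ≠ x} = {x} := by ext u; simp
      rw [hset]
      exact gaussianReal_singleton x
    filter_upwards [hne] with u hu
    rw [(hD u hu).deriv]
  rw [integral_congr_ae hae, gaussianReal_of_var_ne_zero 0 one_ne_zero]
  have hrw : (volume.withDensity (gaussianPDF 0 1))
      = volume.withDensity (fun u => ((Real.toNNReal (gaussianPDFReal 0 1 u) : ℝ≥0) : ℝ≥0∞)) := rfl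
  rw [hrw, integral_withDensity_eq_integral_smul
    ((measurable_gaussianPDFReal 0 1).real_toNNReal)]
  have key : (fun u : ℝ => (Real.toNNReal (gaussianPDFReal 0 1 u))
        • ((u * fx u + ((if u ≤ x then (1:ℝ) else 0) - steinC x)) * u))
      = fun u : ℝ => (Real.sqrt (2 * π))⁻¹ * (u ^ 2 * steinG x u + u * steinH x u) := by
    funext u
    rw [NNReal.smul_def, Real.coe_toNNReal _ (gaussianPDFReal_nonneg 0 1 u),
      gaussianPDFReal_std, smul_eq_mul, hfx']
    unfold steinH
    have hee : Real.exp (-u ^ 2 / 2) * Real.exp (u ^ 2 / 2) = 1 := by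
      rw [← Real.exp_add, show -u ^ 2 / 2 + u ^ 2 / 2 = 0 by ring, Real.exp_zero]
    linear_combination ((Real.sqrt (2 * π))⁻¹ * u ^ 2 * steinG x u) * hee
  rw [key, integral_const_mul]
  have hint2 : Integrable (fun u : ℝ => u * steinH x u) := by
    have := steinH_mom_integrable x (by norm_num : 1 ≤ 4)
    simpa using this
  rw [integral_add (steinG_sq_integrable x) hint2, steinG_sq_integral, steinH_mom1]
  ring
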